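/- Let t be a closed μωT_s-expression of category T over Σ in which no subexpression denotes the empty set and every subexpression of category T denoting {ε} is the symbol ε. Then the language |t| consists of well-ordered words only if and only if every subexpression of t of the form t₁×t₂ satisfies t₂ = ε. -/

import Mathlib

/-! ## Countable words over an alphabet -/

/-- A "preword" over `A`: a countable linear order realized as a set of rationals,
together with a labeling of its elements by letters of `A`. -/
structure PreWord (A : Type) : Type where
  carrier : Set ℚ
  label : carrier → A

namespace PreWord

/-- Two prewords are equivalent iff there is an order isomorphism between their
carriers preserving the labels. -/
def Equiv {A : Type} (u v : PreWord A) : Prop :=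
  ∃ f : u.carrier ≃o v.carrier, ∀ q, v.label (f q) = u.label q

theorem Equiv.refl {A : Type} (u : PreWord A) : Equiv u u :=
  ⟨OrderIso.refl _, fun _ => rfl⟩

theorem Equiv.symm {A : Type} {u v : PreWord A} : Equiv u v → Equiv v u := by
  rintro ⟨f, hf⟩
  exact ⟨f.symm, fun q => by rw [← hf (f.symm q), OrderIso.apply_symm_apply]⟩

theorem Equiv.trans {A : Type} {u v w : PreWord A} : Equiv u v → Equiv v w → Equiv u w := by
  rintro ⟨f, hf⟩ ⟨g, hg⟩
  exact ⟨f.trans g, fun q => by rw [OrderIso.trans_apply, hg, hf]⟩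

instance setoid (A : Type) : Setoid (PreWord A) where
  r := Equiv
  iseqv := ⟨Equiv.refl, Equiv.symm, Equiv.trans⟩

end PreWord

/-- A countable word over `A`: an isomorphism class of labeled countable linear orders. -/
def Word (A : Type) : Type := Quotient (PreWord.setoid A)

namespace Word

/-- The word determined by an arbitrary countable linear order `I` with labeling `lab`. -/
noncomputable def of {I A : Type} [LinearOrder I] [Countable I] (lab : I → A) : Word A :=
  let e : I ↪o ℚ := (Order.embedding_from_countable_to_dense I ℚ).some
  Quotient.mk _ ⟨Set.range e, fun q => lab (Classical.choose q.2)⟩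

/-- The empty word. -/
def eps (A : Type) : Word A :=
  Quotient.mk _ ⟨∅, fun q => absurd q.2 (Set.notMem_empty q.1)⟩

/-- The one-letter word. -/
def letter {A : Type} (a : A) : Word A :=
  Quotient.mk _ ⟨{(0 : ℚ)}, fun _ => a⟩

/-- Relabeling of a word along a function. -/
noncomputable def map {A B : Type} (g : A → B) (w : Word A) : Word B :=
  Quotient.mk _ ⟨(Quotient.out w).carrier, fun q => g ((Quotient.out w).label q)⟩

instance sigmaLexCountable {I : Type} (κ : I → Type) [Countable I] [∀ i, Countable (κ i)] :
    Countable (Σₗ i, κ i) :=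
  inferInstanceAs (Countable (Σ i, κ i))

/-- Generalized concatenation `∏_{i ∈ I} w i` of words over a countable linear order `I`:
the word on the lexicographically ordered disjoint sum of the underlying orders. -/
noncomputable def concat {I A : Type} [LinearOrder I] [Countable I] (w : I → Word A) : Word A :=
  Word.of (I := Σₗ i : I, (Quotient.out (w i)).carrier)
    (fun p => (Quotient.out (w (ofLex p).1)).label (ofLex p).2)

/-- Binary concatenation of words. -/
noncomputable def append {A : Type} (u v : Word A) : Word A :=
  concat (I := Fin 2) ![u, v]

/-- The finite word given by a list of letters. -/
noncomputable def ofList {A : Type} (l : List A) : Word A :=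
  Word.of (I := Fin l.length) l.get

/-- Concatenation of a finite list of words. -/
noncomputable def concatList {A : Type} (l : List (Word A)) : Word A :=
  concat (I := Fin l.length) l.get

/-- A word is scattered if its underlying linear order has no suborder isomorphic to `ℚ`,
equivalently there is no order embedding of `ℚ` into it. -/
def IsScattered {A : Type} (w : Word A) : Prop :=
  IsEmpty (ℚ ↪o (Quotient.out w).carrier)

/-- A word is well-ordered if its underlying linear order has no suborder isomorphic to the
negative integers, i.e. there is no order embedding of `ℕᵒᵈ` into it. -/
def IsWellOrdered {A : Type} (w : Word A) : Prop :=
  IsEmpty (ℕᵒᵈ ↪o (Quotient.out w).carrier)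

end Word

/-! ## Languages and their operations -/

namespace Lang

/-- Concatenation of languages. -/
noncomputable def conc {A : Type} (L₁ L₂ : Set (Word A)) : Set (Word A) :=
  {w | ∃ u ∈ L₁, ∃ v ∈ L₂, w = Word.append u v}

/-- ω-power of a language: `L^ω = {∏_{i∈ℕ} w i : ∀ i, w i ∈ L}`. -/
noncomputable def omegaPow {A : Type} (L : Set (Word A)) : Set (Word A) :=
  {w | ∃ f : ℕ → Word A, (∀ i, f i ∈ L) ∧ w = Word.concat f}

end Lang
/-! ## Pairs of words and their operations -/

namespace PairLang

/-- Product of pairs of words: `(u,v)·(u',v') = (uu', v'v)`. -/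
noncomputable def pairMul {A : Type} (p q : Word A × Word A) : Word A × Word A :=
  (Word.append p.1 q.1, Word.append q.2 p.2)

/-- Concatenation of sets of pairs of words. -/
noncomputable def conc {A : Type} (L L' : Set (Word A × Word A)) : Set (Word A × Word A) :=
  {r | ∃ p ∈ L, ∃ q ∈ L', r = pairMul p q}

/-- Kleene star of a set of pairs of words: `L^* = {(ε,ε)} ∪ L ∪ L·L ∪ ⋯`. -/
noncomputable def star {A : Type} (L : Set (Word A × Word A)) : Set (Word A × Word A) :=
  {r | ∃ l : List (Word A × Word A), (∀ p ∈ l, p ∈ L) ∧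
        r = l.foldr pairMul (Word.eps A, Word.eps A)}

instance sumLexCountable : Countable (ℕ ⊕ₗ ℕᵒᵈ) :=
  inferInstanceAs (Countable (ℕ ⊕ ℕᵒᵈ))

/-- The word `∏_{i∈ℕ}(u_i, v_i) = (u₀u₁⋯)(⋯v₁v₀)`: the concatenation of the first
components in increasing order of `i` followed by the second components in decreasing
order of `i`. -/
noncomputable def omegaWord {A : Type} (f : ℕ → Word A × Word A) : Word A :=
  Word.concat (I := ℕ ⊕ₗ ℕᵒᵈ)
    (fun i => Sum.elim (fun n : ℕ => (f n).1)
      (fun n : ℕᵒᵈ => (f (OrderDual.ofDual n)).2) (ofLex i))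

/-- ω-power of a set of pairs of words, a language of words. -/
noncomputable def omegaPow {A : Type} (L : Set (Word A × Word A)) : Set (Word A) :=
  {w | ∃ f : ℕ → Word A × Word A, (∀ i, f i ∈ L) ∧ w = omegaWord f}

/-- `L₁ × L₂ = {(u,v) : u ∈ L₁, v ∈ L₂}`. -/
def prod {A : Type} (L₁ L₂ : Set (Word A)) : Set (Word A × Word A) :=
  {p | p.1 ∈ L₁ ∧ p.2 ∈ L₂}

end PairLang
/-! ## μωT_s-expressions -/

mutual
  /-- `μωT_s`-expressions of syntactic category `T` over the alphabet `A`: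
  `T ::= a | ε | x | T+T | T·T | μx.T | P^ω`. -/
  inductive TS (A : Type) : Type
    | letter : A → TS A
    | eps : TS A
    | var : ℕ → TS A
    | add : TS A → TS A → TS A
    | mul : TS A → TS A → TS A
    | mu : ℕ → TS A → TS A
    | omega : PS A → TS A

  /-- `μωT_s`-expressions of syntactic category `P` over the alphabet `A`:
  `P ::= T×T | P+P | P·P | P^*`. -/
  inductive PS (A : Type) : Type
    | pair : TS A → TS A → PS A
    | add : PS A → PS A → PS A
    | mul : PS A → PS A → PS A
    | star : PS A → PS A
end

mutual
  /-- The free variables of a `T`-expression. -/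
  def TS.free {A : Type} : TS A → Set ℕ
    | .letter _ => ∅
    | .eps => ∅
    | .var x => {x}
    | .add s t => s.free ∪ t.free
    | .mul s t => s.free ∪ t.free
    | .mu x s => s.free \ {x}
    | .omega p => p.free

  /-- The free variables of a `P`-expression. -/
  def PS.free {A : Type} : PS A → Set ℕ
    | .pair s t => s.free ∪ t.free
    | .add p q => p.free ∪ q.free
    | .mul p q => p.free ∪ q.free
    | .star p => p.free
end

mutual
  /-- The language denoted by a `T`-expression in the environment `ρ`. -/
  noncomputable def TS.den {A : Type} : TS A → (ℕ → Set (Word A)) → Set (Word A)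
    | .letter a, _ => {Word.letter a}
    | .eps, _ => {Word.eps A}
    | .var x, ρ => ρ x
    | .add s t, ρ => s.den ρ ∪ t.den ρ
    | .mul s t, ρ => Lang.conc (s.den ρ) (t.den ρ)
    | .mu x s, ρ => sInf {L : Set (Word A) | s.den (Function.update ρ x L) ⊆ L}
    | .omega p, ρ => PairLang.omegaPow (p.den ρ)

  /-- The set of pairs of words denoted by a `P`-expression in the environment `ρ`. -/
  noncomputable def PS.den {A : Type} : PS A → (ℕ → Set (Word A)) → Set (Word A × Word A)
    | .pair s t, ρ => PairLang.prod (s.den ρ) (t.den ρ)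
    | .add p q, ρ => p.den ρ ∪ q.den ρ
    | .mul p q, ρ => PairLang.conc (p.den ρ) (q.den ρ)
    | .star p, ρ => PairLang.star (p.den ρ)
end

mutual
  /-- The `T`-subexpressions of a `T`-expression. -/
  def TS.subT {A : Type} : TS A → Set (TS A)
    | .letter a => {.letter a}
    | .eps => {.eps}
    | .var x => {.var x}
    | .add s t => insert (.add s t) (s.subT ∪ t.subT)
    | .mul s t => insert (.mul s t) (s.subT ∪ t.subT)
    | .mu x s => insert (.mu x s) s.subT
    | .omega p => insert (.omega p) p.subT

  /-- The `T`-subexpressions of a `P`-expression. -/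
  def PS.subT {A : Type} : PS A → Set (TS A)
    | .pair s t => s.subT ∪ t.subT
    | .add p q => p.subT ∪ q.subT
    | .mul p q => p.subT ∪ q.subT
    | .star p => p.subT
end

mutual
  /-- The `P`-subexpressions of a `T`-expression. -/
  def TS.subP {A : Type} : TS A → Set (PS A)
    | .letter _ => ∅
    | .eps => ∅
    | .var _ => ∅
    | .add s t => s.subP ∪ t.subP
    | .mul s t => s.subP ∪ t.subP
    | .mu _ s => s.subP
    | .omega p => insert p p.subP

  /-- The `P`-subexpressions of a `P`-expression. -/
  def PS.subP {A : Type} : PS A → Set (PS A)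
    | .pair s t => insert (.pair s t) (s.subP ∪ t.subP)
    | .add p q => insert (.add p q) (p.subP ∪ q.subP)
    | .mul p q => insert (.mul p q) (p.subP ∪ q.subP)
    | .star p => insert (.star p) p.subP
end

mutual
  /-- Relabeling the letters of a `T`-expression. -/
  def TS.map {A B : Type} (g : A → B) : TS A → TS B
    | .letter a => .letter (g a)
    | .eps => .eps
    | .var x => .var x
    | .add s t => .add (s.map g) (t.map g)
    | .mul s t => .mul (s.map g) (t.map g)
    | .mu x s => .mu x (s.map g)
    | .omega p => .omega (p.map g)

  /-- Relabeling the letters of a `P`-expression. -/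
  def PS.map {A B : Type} (g : A → B) : PS A → PS B
    | .pair s t => .pair (s.map g) (t.map g)
    | .add p q => .add (p.map g) (q.map g)
    | .mul p q => .mul (p.map g) (q.map g)
    | .star p => .star (p.map g)
end

/-- The language denoted by a `T`-expression with its free variables treated as letters:
a language over the alphabet `A ⊕ ℕ` (letters on the left, variables on the right). -/
noncomputable def TS.denL {A : Type} (t : TS A) : Set (Word (A ⊕ ℕ)) :=
  TS.den (t.map Sum.inl) (fun x => {Word.letter (Sum.inr x)})

/-- The set of pairs of words denoted by a `P`-expression with its free variables treated
as letters. -/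
noncomputable def PS.denL {A : Type} (p : PS A) :
    Set (Word (A ⊕ ℕ) × Word (A ⊕ ℕ)) :=
  PS.den (p.map Sum.inl) (fun x => {Word.letter (Sum.inr x)})

/-! ### Auxiliary order-theoretic machinery -/

section BadOrd

/-- A preorder is bad if it contains a strictly decreasing ℕ-sequence. -/
def BadOrd (X : Type*) [Preorder X] : Prop := ∃ s : ℕ → X, StrictAnti s

theorem badOrd_iff_nonempty_emb {X : Type*} [Preorder X] :
    BadOrd X ↔ Nonempty (ℕᵒᵈ ↪o X) := by
  constructor
  · rintro ⟨s, hs⟩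
    refine ⟨OrderEmbedding.ofStrictMono (fun n => s (OrderDual.ofDual n)) ?_⟩
    intro a b hab
    exact hs hab
  · rintro ⟨f⟩
    exact ⟨fun n => f (OrderDual.toDual n), fun m n h => f.strictMono (by exact h)⟩

theorem BadOrd.map {X Y : Type*} [Preorder X] [Preorder Y] {f : X → Y}
    (hf : StrictMono f) : BadOrd X → BadOrd Y := by
  rintro ⟨s, hs⟩
  exact ⟨f ∘ s, hf.comp_strictAnti hs⟩

theorem not_badOrd_nat : ¬ BadOrd ℕ := by
  rintro ⟨s, hs⟩
  have h : ∀ n, s n + n ≤ s 0 := by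
    intro n
    induction n with
    | zero => simp
    | succ n ih =>
      have h2 : s (n + 1) < s n := hs (by omega)
      omega
  have := h (s 0 + 1)
  omega

theorem not_badOrd_of_finite {X : Type*} [LinearOrder X] [Finite X] : ¬ BadOrd X := by
  rintro ⟨s, hs⟩
  obtain ⟨a, b, hab, h⟩ := Finite.exists_ne_map_eq_of_infinite s
  exact hab (hs.injective h)

theorem not_badOrd_subtype_nat (P : ℕ → Prop) : ¬ BadOrd {n : ℕ // P n} := by
  intro h
  exact not_badOrd_nat (h.map (Subtype.strictMono_coe _))

end BadOrd

section SigmaLex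

variable {I : Type*} [LinearOrder I] {κ : I → Type*} [∀ i, LinearOrder (κ i)]

theorem sigma_fst_antitone {a b : Σₗ i, κ i} (h : a ≤ b) : a.1 ≤ b.1 := by
  rcases Sigma.Lex.le_def.mp h with h | ⟨h, -⟩
  · exact h.le
  · exact h.le

theorem lt_fiber_of_lex_lt {a b : Σₗ i, κ i} {i : I} (ha : a.1 = i) (hb : b.1 = i)
    (hab : a < b) : ha ▸ a.2 < hb ▸ b.2 := by
  obtain ⟨a1, a2⟩ := a
  obtain ⟨b1, b2⟩ := b
  dsimp at ha hb
  subst ha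
  subst hb
  rcases Sigma.Lex.lt_def.mp hab with h | ⟨h, h2⟩
  · exact absurd h (lt_irrefl _)
  · exact h2

/-- Extract a strictly decreasing sequence in a fiber from a strictly decreasing
sequence in the lex sigma with constant first component. -/
theorem badOrd_fiber_of_const {s : ℕ → Σₗ i, κ i} (hs : StrictAnti s)
    (i : I) (hconst : ∀ n, (s n).1 = i) : BadOrd (κ i) := by
  refine ⟨fun n => (hconst n) ▸ (s n).2, ?_⟩
  intro m n hmn
  exact lt_fiber_of_lex_lt (hconst n) (hconst m) (hs hmn)

theorem badOrd_sigma_of_fiber {i : I} (h : BadOrd (κ i)) : BadOrd (Σₗ i, κ i) := by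
  obtain ⟨s, hs⟩ := h
  refine ⟨fun n => ⟨i, s n⟩, ?_⟩
  intro m n hmn
  exact Sigma.Lex.lt_def.mpr (Or.inr ⟨rfl, hs hmn⟩)

theorem badOrd_sigma_of_index {t : ℕ → I} (ht : StrictAnti t)
    (hne : ∀ n, Nonempty (κ (t n))) : BadOrd (Σₗ i, κ i) := by
  refine ⟨fun n => ⟨t n, (hne n).some⟩, ?_⟩
  intro m n hmn
  exact Sigma.Lex.lt_def.mpr (Or.inl (ht hmn))

end SigmaLex
section SigmaLex2

variable {I : Type*} [LinearOrder I] {κ : I → Type*} [∀ i, LinearOrder (κ i)]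

theorem not_badOrd_sigma (h1 : ∀ i, ¬ BadOrd (κ i))
    (h2 : ¬ BadOrd {i : I // Nonempty (κ i)}) : ¬ BadOrd (Σₗ i, κ i) := by
  rintro ⟨s, hs⟩
  set g : ℕ → I := fun n => (s n).1 with hg
  have hganti : ∀ {m n : ℕ}, m ≤ n → g n ≤ g m := by
    intro m n h
    exact sigma_fst_antitone (hs.antitone h)
  by_cases hc : ∀ N, ∃ n, g (N + n + 1) < g N
  · choose ν hν using hc
    set φ : ℕ → ℕ := fun k => Nat.rec 0 (fun k fk => fk + ν fk + 1) k with hφ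
    have hφs : ∀ k, g (φ (k + 1)) < g (φ k) := fun k => hν (φ k)
    have ht : StrictAnti (fun k => (⟨g (φ k), ⟨(s (φ k)).2⟩⟩ : {i : I // Nonempty (κ i)})) := by
      apply strictAnti_nat_of_succ_lt
      intro k
      exact Subtype.mk_lt_mk.mpr (hφs k)
    exact h2 ⟨_, ht⟩
  · push_neg at hc
    obtain ⟨N, hN⟩ := hc
    have hconst : ∀ n, g (N + n) = g N := by
      intro n
      cases n with
      | zero => rfl
      | succ k => exact le_antisymm (hganti (by omega)) (hN k)
    have hs' : StrictAnti (fun n => s (N + n)) :=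
      hs.comp_strictMono (fun m n h => by omega)
    exact h1 (g N) (badOrd_fiber_of_const hs' (g N) hconst)

theorem not_badOrd_subtype_natsum {κ : ℕ ⊕ₗ ℕᵒᵈ → Type*}
    (h : ∀ n : ℕᵒᵈ, IsEmpty (κ (toLex (Sum.inr n)))) :
    ¬ BadOrd {i : ℕ ⊕ₗ ℕᵒᵈ // Nonempty (κ i)} := by
  rintro ⟨s, hs⟩
  have key : ∀ x : {i : ℕ ⊕ₗ ℕᵒᵈ // Nonempty (κ i)}, ∃ m : ℕ, x.val = toLex (Sum.inl m) := by
    rintro ⟨i, hi⟩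
    cases hh : ofLex i with
    | inl n => exact ⟨n, congrArg toLex hh⟩
    | inr n =>
      exfalso
      have : i = toLex (Sum.inr n) := congrArg toLex hh
      rw [this] at hi
      exact (h n).false hi.some
  choose m hm using key
  apply not_badOrd_nat
  refine ⟨fun n => m (s n), ?_⟩
  intro a b hab
  have : (s b).val < (s a).val := Subtype.coe_lt_coe.mpr (hs hab)
  rw [hm (s a), hm (s b)] at this
  exact Sum.Lex.inl_lt_inl_iff.mp this

end SigmaLex2
section WordLemmas

theorem not_badOrd_of_isEmpty {X : Type*} [Preorder X] [IsEmpty X] : ¬ BadOrd X := by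
  rintro ⟨s, -⟩
  exact isEmptyElim (s 0)

theorem badOrd_congr {X Y : Type*} [Preorder X] [Preorder Y] (f : X ≃o Y) :
    BadOrd X ↔ BadOrd Y :=
  ⟨BadOrd.map f.strictMono, BadOrd.map f.symm.strictMono⟩

namespace Word

variable {A : Type}

theorem out_equiv_of_mk (p : PreWord A) :
    PreWord.Equiv (Quotient.out (Quotient.mk (PreWord.setoid A) p)) p :=
  by have h := Quotient.exact (Quotient.out_eq (Quotient.mk (PreWord.setoid A) p)); exact h

theorem nonempty_iso_out_of {I : Type} [LinearOrder I] [Countable I] (lab : I → A) :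
    Nonempty (I ≃o (Quotient.out (Word.of lab)).carrier) := by
  obtain ⟨f, -⟩ := out_equiv_of_mk (A := A)
    ⟨Set.range ((Order.embedding_from_countable_to_dense I ℚ).some),
      fun q => lab (Classical.choose q.2)⟩
  exact ⟨(((Order.embedding_from_countable_to_dense I ℚ).some).strictMono.orderIso _).trans
    f.symm⟩

theorem isWellOrdered_iff_not_badOrd (w : Word A) :
    w.IsWellOrdered ↔ ¬ BadOrd (Quotient.out w).carrier := by
  rw [Word.IsWellOrdered, badOrd_iff_nonempty_emb, ← not_nonempty_iff]

theorem of_badOrd_iff {I : Type} [LinearOrder I] [Countable I] (lab : I → A) :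
    BadOrd (Quotient.out (Word.of (A := A) lab)).carrier ↔ BadOrd I := by
  obtain ⟨f⟩ := nonempty_iso_out_of lab
  exact (badOrd_congr f).symm

theorem of_nonempty_iff {I : Type} [LinearOrder I] [Countable I] (lab : I → A) :
    Nonempty (Quotient.out (Word.of (A := A) lab)).carrier ↔ Nonempty I := by
  obtain ⟨f⟩ := nonempty_iso_out_of lab
  exact (f.toEquiv.nonempty_congr).symm

theorem out_eps_isEmpty : IsEmpty ((Quotient.out (Word.eps A)).carrier) := by
  obtain ⟨f, -⟩ := out_equiv_of_mk (A := A) ⟨∅, fun q => absurd q.2 (Set.notMem_empty q.1)⟩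
  exact f.toEquiv.isEmpty

theorem eq_eps_iff {w : Word A} : w = Word.eps A ↔ IsEmpty ((Quotient.out w).carrier) := by
  constructor
  · rintro rfl
    exact out_eps_isEmpty
  · intro h
    haveI := h
    rw [← Quotient.out_eq w]
    apply Quotient.sound
    exact ⟨⟨Equiv.equivOfIsEmpty _ _, fun {a} => isEmptyElim a⟩, fun q => isEmptyElim q⟩

theorem ne_eps_iff {w : Word A} : w ≠ Word.eps A ↔ Nonempty ((Quotient.out w).carrier) := by
  rw [Ne, eq_eps_iff, not_isEmpty_iff]

theorem eps_isWellOrdered : (Word.eps A).IsWellOrdered := by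
  rw [isWellOrdered_iff_not_badOrd]
  haveI := out_eps_isEmpty (A := A)
  exact not_badOrd_of_isEmpty

theorem letter_ne_eps (a : A) : Word.letter a ≠ Word.eps A := by
  rw [ne_eps_iff]
  obtain ⟨f, -⟩ := out_equiv_of_mk (A := A) ⟨{(0 : ℚ)}, fun _ => a⟩
  exact ⟨f.symm ⟨0, rfl⟩⟩

theorem letter_isWellOrdered (a : A) : (Word.letter a).IsWellOrdered := by
  rw [isWellOrdered_iff_not_badOrd]
  obtain ⟨f, -⟩ := out_equiv_of_mk (A := A) ⟨{(0 : ℚ)}, fun _ => a⟩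
  haveI : Finite ({(0 : ℚ)} : Set ℚ) := (Set.finite_singleton _).to_subtype
  exact fun hb => not_badOrd_of_finite (BadOrd.map f.strictMono hb)

theorem concat_not_wo_iff {I : Type} [LinearOrder I] [Countable I] (w : I → Word A) :
    ¬ (Word.concat w).IsWellOrdered ↔
      BadOrd (Σₗ i : I, ((Quotient.out (w i)).carrier)) := by
  rw [isWellOrdered_iff_not_badOrd, not_not]
  exact of_badOrd_iff _

theorem concat_ne_eps_iff {I : Type} [LinearOrder I] [Countable I] (w : I → Word A) :
    Word.concat w ≠ Word.eps A ↔ ∃ i, w i ≠ Word.eps A := by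
  rw [ne_eps_iff]
  have h1 : Nonempty ((Quotient.out (Word.concat w)).carrier) ↔
      Nonempty (Σₗ i : I, ((Quotient.out (w i)).carrier)) := of_nonempty_iff _
  rw [h1]
  constructor
  · rintro ⟨x⟩
    exact ⟨(ofLex x).1, ne_eps_iff.mpr ⟨(ofLex x).2⟩⟩
  · rintro ⟨i, hi⟩
    obtain ⟨x⟩ := ne_eps_iff.mp hi
    exact ⟨toLex ⟨i, x⟩⟩

end Word

end WordLemmas
section AppendOmega

namespace Word

variable {A : Type} {u v : Word A}

theorem not_wo_iff_badOrd (w : Word A) :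
    ¬ w.IsWellOrdered ↔ BadOrd ((Quotient.out w).carrier) := by
  rw [isWellOrdered_iff_not_badOrd, not_not]

theorem concat_eq_eps_iff {I : Type} [LinearOrder I] [Countable I] (w : I → Word A) :
    Word.concat w = Word.eps A ↔ ∀ i, w i = Word.eps A := by
  rw [← not_ne_iff, concat_ne_eps_iff]
  push_neg
  rfl

theorem append_eq_eps_iff : Word.append u v = Word.eps A ↔ u = Word.eps A ∧ v = Word.eps A := by
  have h : Word.append u v = Word.concat ![u, v] := rfl
  rw [h, concat_eq_eps_iff]
  constructor
  · intro h2
    exact ⟨h2 0, h2 1⟩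
  · rintro ⟨h1, h2⟩ i
    fin_cases i
    · exact h1
    · exact h2

theorem eps_append_eps : Word.append (Word.eps A) (Word.eps A) = Word.eps A :=
  append_eq_eps_iff.mpr ⟨rfl, rfl⟩

theorem append_isWellOrdered (hu : u.IsWellOrdered) (hv : v.IsWellOrdered) :
    (Word.append u v).IsWellOrdered := by
  by_contra h
  have hb := (concat_not_wo_iff ![u, v]).mp h
  refine not_badOrd_sigma ?_ ?_ hb
  · intro i
    fin_cases i
    · exact (isWellOrdered_iff_not_badOrd u).mp hu
    · exact (isWellOrdered_iff_not_badOrd v).mp hv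
  · exact not_badOrd_of_finite

theorem append_not_wo_left (v : Word A) (h : ¬ u.IsWellOrdered) :
    ¬ (Word.append u v).IsWellOrdered := by
  apply (concat_not_wo_iff ![u, v]).mpr
  exact badOrd_sigma_of_fiber (i := (0 : Fin 2)) ((not_wo_iff_badOrd u).mp h)

theorem append_not_wo_right (u : Word A) (h : ¬ v.IsWellOrdered) :
    ¬ (Word.append u v).IsWellOrdered := by
  apply (concat_not_wo_iff ![u, v]).mpr
  exact badOrd_sigma_of_fiber (i := (1 : Fin 2)) ((not_wo_iff_badOrd v).mp h)

end Word

namespace PairLang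

variable {A : Type} {f : ℕ → Word A × Word A}

private def W (f : ℕ → Word A × Word A) : ℕ ⊕ₗ ℕᵒᵈ → Word A := fun i =>
  Sum.elim (fun n : ℕ => (f n).1) (fun n : ℕᵒᵈ => (f (OrderDual.ofDual n)).2) (ofLex i)

theorem omegaWord_eq_concat (f : ℕ → Word A × Word A) :
    omegaWord f = Word.concat (W f) := rfl

theorem omegaWord_not_wo_of_snd (h : ∀ n, (f n).2 ≠ Word.eps A) :
    ¬ (omegaWord f).IsWellOrdered := by
  rw [omegaWord_eq_concat]
  apply (Word.concat_not_wo_iff _).mpr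
  apply badOrd_sigma_of_index (t := fun n => toLex (Sum.inr (OrderDual.toDual n)))
  · intro m n hmn
    exact Sum.Lex.inr_lt_inr_iff.mpr (OrderDual.toDual_lt_toDual.mpr hmn)
  · intro n
    exact Word.ne_eps_iff.mp (h n)

theorem omegaWord_not_wo_of_fst (n : ℕ) (h : ¬ ((f n).1).IsWellOrdered) :
    ¬ (omegaWord f).IsWellOrdered := by
  rw [omegaWord_eq_concat]
  apply (Word.concat_not_wo_iff _).mpr
  exact badOrd_sigma_of_fiber (i := toLex (Sum.inl n)) ((Word.not_wo_iff_badOrd _).mp h)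

theorem omegaWord_wo (h1 : ∀ n, ((f n).1).IsWellOrdered) (h2 : ∀ n, (f n).2 = Word.eps A) :
    (omegaWord f).IsWellOrdered := by
  rw [omegaWord_eq_concat]
  by_contra h
  have hb := (Word.concat_not_wo_iff _).mp h
  refine not_badOrd_sigma ?_ ?_ hb
  · intro i
    cases hh : ofLex i with
    | inl n =>
      rw [show i = toLex (Sum.inl n) from congrArg toLex hh]
      exact (Word.isWellOrdered_iff_not_badOrd _).mp (h1 n)
    | inr n =>
      rw [show i = toLex (Sum.inr n) from congrArg toLex hh]
      show ¬ BadOrd ((Quotient.out ((f (OrderDual.ofDual n)).2)).carrier)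
      rw [h2 (OrderDual.ofDual n)]
      haveI := Word.out_eps_isEmpty (A := A)
      exact not_badOrd_of_isEmpty
  · apply not_badOrd_subtype_natsum
    intro n
    show IsEmpty ((Quotient.out ((f (OrderDual.ofDual n)).2)).carrier)
    rw [h2 (OrderDual.ofDual n)]
    exact Word.out_eps_isEmpty

theorem omegaWord_ne_eps_iff :
    omegaWord f ≠ Word.eps A ↔ ∃ n, ((f n).1 ≠ Word.eps A ∨ (f n).2 ≠ Word.eps A) := by
  rw [omegaWord_eq_concat, Word.concat_ne_eps_iff]
  constructor
  · rintro ⟨i, hi⟩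
    cases hh : ofLex i with
    | inl n =>
      rw [show i = toLex (Sum.inl n) from congrArg toLex hh] at hi
      exact ⟨n, Or.inl hi⟩
    | inr n =>
      rw [show i = toLex (Sum.inr n) from congrArg toLex hh] at hi
      exact ⟨OrderDual.ofDual n, Or.inr hi⟩
  · rintro ⟨n, h | h⟩
    · exact ⟨toLex (Sum.inl n), h⟩
    · exact ⟨toLex (Sum.inr (OrderDual.toDual n)), h⟩

end PairLang

end AppendOmega
section Abstract

/-- Abstract value: (is nonempty, contains a non-empty word). -/
abbrev AVal := Prop × Prop

theorem prodPropExt {p q : AVal} (h1 : p.1 ↔ q.1) (h2 : p.2 ↔ q.2) : p = q := by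
  obtain ⟨a, b⟩ := p
  obtain ⟨c, d⟩ := q
  simp only [Prod.mk.injEq]
  exact ⟨propext h1, propext h2⟩

def aconc (d e : AVal) : AVal := (d.1 ∧ e.1, (d.2 ∧ e.1) ∨ (d.1 ∧ e.2))

theorem aconc_mono {d d' e e' : AVal} (hd : d ≤ d') (he : e ≤ e') :
    aconc d e ≤ aconc d' e' := by
  obtain ⟨hd1, hd2⟩ := hd
  obtain ⟨he1, he2⟩ := he
  constructor
  · rintro ⟨a, b⟩
    exact ⟨hd1 a, he1 b⟩
  · rintro (⟨a, b⟩ | ⟨a, b⟩)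
    · exact Or.inl ⟨hd2 a, he1 b⟩
    · exact Or.inr ⟨hd1 a, he2 b⟩

theorem update_le_update {ι : Type*} [DecidableEq ι] {β : Type*} [Preorder β]
    {η₁ η₂ : ι → β} (h : ∀ y, η₁ y ≤ η₂ y) (x : ι) (d : β) :
    ∀ y, Function.update η₁ x d y ≤ Function.update η₂ x d y := by
  intro y
  rcases eq_or_ne y x with rfl | hne
  · simp
  · simpa [Function.update_apply, hne] using h y

mutual
  /-- Abstract denotation of a `T`-expression. -/
  noncomputable def TS.aden {A : Type} : TS A → (ℕ → AVal) → AVal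
    | .letter _, _ => (True, True)
    | .eps, _ => (True, False)
    | .var x, η => η x
    | .add s t, η => s.aden η ⊔ t.aden η
    | .mul s t, η => aconc (s.aden η) (t.aden η)
    | .mu x s, η => sInf {d : AVal | s.aden (Function.update η x d) ≤ d}
    | .omega p, η => p.aden η

  /-- Abstract denotation of a `P`-expression. -/
  noncomputable def PS.aden {A : Type} : PS A → (ℕ → AVal) → AVal
    | .pair s t, η => aconc (s.aden η) (t.aden η)
    | .add p q, η => p.aden η ⊔ q.aden η
    | .mul p q, η => aconc (p.aden η) (q.aden η)
    | .star p, η => (True, (p.aden η).2)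
end

/-- Abstraction of a language. -/
def alpha {A : Type} (L : Set (Word A)) : AVal := (L.Nonempty, ∃ w ∈ L, w ≠ Word.eps A)

/-- Abstraction of a set of pairs. -/
def alphaP {A : Type} (L : Set (Word A × Word A)) : AVal :=
  (L.Nonempty, ∃ p ∈ L, (p.1 ≠ Word.eps A ∨ p.2 ≠ Word.eps A))

theorem alpha_sSup {A : Type} (S : Set (Set (Word A))) :
    alpha (sSup S) = sSup (alpha '' S) := by
  apply prodPropExt
  · rw [Prod.fst_sSup, sSup_Prop_eq]
    constructor
    · rintro ⟨w, L, hLS, hwL⟩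
      exact ⟨(alpha L).1, ⟨_, Set.mem_image_of_mem alpha hLS, rfl⟩, ⟨w, hwL⟩⟩
    · rintro ⟨p, ⟨_, ⟨L, hLS, rfl⟩, rfl⟩, w, hw⟩
      exact ⟨w, L, hLS, hw⟩
  · rw [Prod.snd_sSup, sSup_Prop_eq]
    constructor
    · rintro ⟨w, ⟨L, hLS, hwL⟩, hne⟩
      exact ⟨(alpha L).2, ⟨_, Set.mem_image_of_mem alpha hLS, rfl⟩,
        ⟨w, hwL, hne⟩⟩
    · rintro ⟨p, ⟨_, ⟨L, hLS, rfl⟩, rfl⟩, w, hwL, hne⟩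
      exact ⟨w, ⟨L, hLS, hwL⟩, hne⟩

theorem alphaP_sSup {A : Type} (S : Set (Set (Word A × Word A))) :
    alphaP (sSup S) = sSup (alphaP '' S) := by
  apply prodPropExt
  · rw [Prod.fst_sSup, sSup_Prop_eq]
    constructor
    · rintro ⟨w, L, hLS, hwL⟩
      exact ⟨(alphaP L).1, ⟨_, Set.mem_image_of_mem alphaP hLS, rfl⟩, ⟨w, hwL⟩⟩
    · rintro ⟨p, ⟨_, ⟨L, hLS, rfl⟩, rfl⟩, w, hw⟩
      exact ⟨w, L, hLS, hw⟩
  · rw [Prod.snd_sSup, sSup_Prop_eq]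
    constructor
    · rintro ⟨w, ⟨L, hLS, hwL⟩, hne⟩
      exact ⟨(alphaP L).2, ⟨_, Set.mem_image_of_mem alphaP hLS, rfl⟩,
        ⟨w, hwL, hne⟩⟩
    · rintro ⟨p, ⟨_, ⟨L, hLS, rfl⟩, rfl⟩, w, hwL, hne⟩
      exact ⟨w, ⟨L, hLS, hwL⟩, hne⟩

theorem lfp_transfer {X D : Type*} [CompleteLattice X] [CompleteLattice D]
    (α : X → D) (F : X → X) (G : D → D)
    (hα : ∀ S : Set X, α (sSup S) = sSup (α '' S))
    (hF : Monotone F) (hG : Monotone G) (comm : ∀ L, α (F L) = G (α L)) :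
    α (sInf {L | F L ≤ L}) = sInf {d | G d ≤ d} := by
  have hmono : Monotone α := by
    intro a b hab
    have h := hα {a, b}
    rw [sSup_pair, sup_eq_right.mpr hab, Set.image_pair, sSup_pair] at h
    rw [h]
    exact le_sup_left
  have hpre : F (sInf {L | F L ≤ L}) ≤ sInf {L | F L ≤ L} := by
    apply le_sInf
    intro L hL
    exact le_trans (hF (sInf_le hL)) hL
  have h1 : sInf {d | G d ≤ d} ≤ α (sInf {L | F L ≤ L}) := by
    apply sInf_le
    show G _ ≤ _
    rw [← comm]
    exact hmono hpre
  have hαγ : ∀ d, α (sSup {L | α L ≤ d}) ≤ d := by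
    intro d
    rw [hα]
    apply sSup_le
    rintro e ⟨L, hL, rfl⟩
    exact hL
  have hpreD : G (sInf {d | G d ≤ d}) ≤ sInf {d | G d ≤ d} := by
    apply le_sInf
    intro d hd
    exact le_trans (hG (sInf_le hd)) hd
  have h2 : α (sInf {L | F L ≤ L}) ≤ sInf {d | G d ≤ d} := by
    have hγpre : F (sSup {L | α L ≤ sInf {d | G d ≤ d}}) ∈
        {L | α L ≤ sInf {d | G d ≤ d}} := by
      show α _ ≤ _
      rw [comm]
      exact le_trans (hG (hαγ _)) hpreD
    have hle : sInf {L | F L ≤ L} ≤ sSup {L | α L ≤ sInf {d | G d ≤ d}} :=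
      sInf_le (le_sSup hγpre)
    exact le_trans (hmono hle) (hαγ _)
  exact le_antisymm h2 h1

end Abstract
section MonoCongr

namespace Lang

theorem conc_mono {A : Type} {L₁ L₁' L₂ L₂' : Set (Word A)} (h1 : L₁ ⊆ L₁') (h2 : L₂ ⊆ L₂') :
    conc L₁ L₂ ⊆ conc L₁' L₂' := by
  rintro w ⟨u, hu, v, hv, rfl⟩
  exact ⟨u, h1 hu, v, h2 hv, rfl⟩

end Lang

namespace PairLang

theorem conc_mono {A : Type} {L₁ L₁' L₂ L₂' : Set (Word A × Word A)}
    (h1 : L₁ ⊆ L₁') (h2 : L₂ ⊆ L₂') : conc L₁ L₂ ⊆ conc L₁' L₂' := by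
  rintro w ⟨u, hu, v, hv, rfl⟩
  exact ⟨u, h1 hu, v, h2 hv, rfl⟩

theorem star_mono {A : Type} {L L' : Set (Word A × Word A)} (h : L ⊆ L') :
    star L ⊆ star L' := by
  rintro w ⟨l, hl, rfl⟩
  exact ⟨l, fun p hp => h (hl p hp), rfl⟩

theorem omegaPow_mono {A : Type} {L L' : Set (Word A × Word A)} (h : L ⊆ L') :
    omegaPow L ⊆ omegaPow L' := by
  rintro w ⟨f, hf, rfl⟩
  exact ⟨f, fun i => h (hf i), rfl⟩

theorem prod_mono {A : Type} {L₁ L₁' L₂ L₂' : Set (Word A)} (h1 : L₁ ⊆ L₁') (h2 : L₂ ⊆ L₂') :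
    prod L₁ L₂ ⊆ prod L₁' L₂' := by
  rintro ⟨u, v⟩ ⟨hu, hv⟩
  exact ⟨h1 hu, h2 hv⟩

end PairLang

mutual
  theorem TS.den_mono {A : Type} : (t : TS A) → {ρ₁ ρ₂ : ℕ → Set (Word A)} →
      (∀ x, ρ₁ x ⊆ ρ₂ x) → t.den ρ₁ ⊆ t.den ρ₂
    | .letter _, _, _, _ => subset_rfl
    | .eps, _, _, _ => subset_rfl
    | .var x, _, _, h => h x
    | .add s t, _, _, h =>
      Set.union_subset_union (TS.den_mono s h) (TS.den_mono t h)
    | .mul s t, _, _, h => Lang.conc_mono (TS.den_mono s h) (TS.den_mono t h)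
    | .mu x s, ρ₁, ρ₂, h => by
      show sInf _ ≤ sInf _
      apply sInf_le_sInf
      intro L hL
      exact le_trans (TS.den_mono s (update_le_update h x L)) hL
    | .omega p, _, _, h => PairLang.omegaPow_mono (PS.den_mono p h)

  theorem PS.den_mono {A : Type} : (p : PS A) → {ρ₁ ρ₂ : ℕ → Set (Word A)} →
      (∀ x, ρ₁ x ⊆ ρ₂ x) → p.den ρ₁ ⊆ p.den ρ₂
    | .pair s t, _, _, h => PairLang.prod_mono (TS.den_mono s h) (TS.den_mono t h)
    | .add p q, _, _, h =>
      Set.union_subset_union (PS.den_mono p h) (PS.den_mono q h)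
    | .mul p q, _, _, h => PairLang.conc_mono (PS.den_mono p h) (PS.den_mono q h)
    | .star p, _, _, h => PairLang.star_mono (PS.den_mono p h)
end

mutual
  theorem TS.aden_mono {A : Type} : (t : TS A) → {η₁ η₂ : ℕ → AVal} →
      (∀ x, η₁ x ≤ η₂ x) → t.aden η₁ ≤ t.aden η₂
    | .letter _, _, _, _ => le_rfl
    | .eps, _, _, _ => le_rfl
    | .var x, _, _, h => h x
    | .add s t, _, _, h => sup_le_sup (TS.aden_mono s h) (TS.aden_mono t h)
    | .mul s t, _, _, h => aconc_mono (TS.aden_mono s h) (TS.aden_mono t h)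
    | .mu x s, η₁, η₂, h => by
      show sInf _ ≤ sInf _
      apply sInf_le_sInf
      intro d hd
      exact le_trans (TS.aden_mono s (update_le_update h x d)) hd
    | .omega p, _, _, h => PS.aden_mono p h

  theorem PS.aden_mono {A : Type} : (p : PS A) → {η₁ η₂ : ℕ → AVal} →
      (∀ x, η₁ x ≤ η₂ x) → p.aden η₁ ≤ p.aden η₂
    | .pair s t, _, _, h => aconc_mono (TS.aden_mono s h) (TS.aden_mono t h)
    | .add p q, _, _, h => sup_le_sup (PS.aden_mono p h) (PS.aden_mono q h)
    | .mul p q, _, _, h => aconc_mono (PS.aden_mono p h) (PS.aden_mono q h)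
    | .star p, _, _, h => ⟨le_rfl, (PS.aden_mono p h).2⟩
end

theorem update_congr_on {ι : Type*} [DecidableEq ι] {β : Type*} {η₁ η₂ : ι → β}
    {S : Set ι} (x : ι) (d : β) (h : ∀ y ∈ S \ {x}, η₁ y = η₂ y) :
    ∀ y ∈ S, Function.update η₁ x d y = Function.update η₂ x d y := by
  intro y hy
  rcases eq_or_ne y x with rfl | hne
  · simp
  · simp only [Function.update_apply, if_neg hne]
    exact h y ⟨hy, hne⟩

mutual
  theorem TS.aden_congr {A : Type} : (t : TS A) → {η₁ η₂ : ℕ → AVal} →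
      (∀ x ∈ t.free, η₁ x = η₂ x) → t.aden η₁ = t.aden η₂
    | .letter _, _, _, _ => rfl
    | .eps, _, _, _ => rfl
    | .var x, _, _, h => h x rfl
    | .add s t, _, _, h => by
      simp only [TS.aden]
      rw [TS.aden_congr s (fun x hx => h x (Set.mem_union_left _ hx)),
        TS.aden_congr t (fun x hx => h x (Set.mem_union_right _ hx))]
    | .mul s t, _, _, h => by
      simp only [TS.aden]
      rw [TS.aden_congr s (fun x hx => h x (Set.mem_union_left _ hx)),
        TS.aden_congr t (fun x hx => h x (Set.mem_union_right _ hx))]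
    | .mu x s, η₁, η₂, h => by
      simp only [TS.aden]
      apply congrArg sInf
      ext d
      simp only [Set.mem_setOf_eq]
      rw [TS.aden_congr s (update_congr_on x d h)]
    | .omega p, _, _, h => PS.aden_congr p h

  theorem PS.aden_congr {A : Type} : (p : PS A) → {η₁ η₂ : ℕ → AVal} →
      (∀ x ∈ p.free, η₁ x = η₂ x) → p.aden η₁ = p.aden η₂
    | .pair s t, _, _, h => by
      simp only [PS.aden]
      rw [TS.aden_congr s (fun x hx => h x (Set.mem_union_left _ hx)),
        TS.aden_congr t (fun x hx => h x (Set.mem_union_right _ hx))]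
    | .add p q, _, _, h => by
      simp only [PS.aden]
      rw [PS.aden_congr p (fun x hx => h x (Set.mem_union_left _ hx)),
        PS.aden_congr q (fun x hx => h x (Set.mem_union_right _ hx))]
    | .mul p q, _, _, h => by
      simp only [PS.aden]
      rw [PS.aden_congr p (fun x hx => h x (Set.mem_union_left _ hx)),
        PS.aden_congr q (fun x hx => h x (Set.mem_union_right _ hx))]
    | .star p, _, _, h => by
      simp only [PS.aden]
      rw [PS.aden_congr p h]
end

mutual
  theorem TS.aden_map {A B : Type} (g : A → B) : (t : TS A) → (η : ℕ → AVal) →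
      (t.map g).aden η = t.aden η
    | .letter _, _ => rfl
    | .eps, _ => rfl
    | .var _, _ => rfl
    | .add s t, η => by
      simp only [TS.map, TS.aden]
      rw [TS.aden_map g s η, TS.aden_map g t η]
    | .mul s t, η => by
      simp only [TS.map, TS.aden]
      rw [TS.aden_map g s η, TS.aden_map g t η]
    | .mu x s, η => by
      simp only [TS.map, TS.aden]
      apply congrArg sInf
      ext d
      simp only [Set.mem_setOf_eq]
      rw [TS.aden_map g s (Function.update η x d)]
    | .omega p, η => by
      simp only [TS.map, TS.aden]
      rw [PS.aden_map g p η]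

  theorem PS.aden_map {A B : Type} (g : A → B) : (p : PS A) → (η : ℕ → AVal) →
      (p.map g).aden η = p.aden η
    | .pair s t, η => by
      simp only [PS.map, PS.aden]
      rw [TS.aden_map g s η, TS.aden_map g t η]
    | .add p q, η => by
      simp only [PS.map, PS.aden]
      rw [PS.aden_map g p η, PS.aden_map g q η]
    | .mul p q, η => by
      simp only [PS.map, PS.aden]
      rw [PS.aden_map g p η, PS.aden_map g q η]
    | .star p, η => by
      simp only [PS.map, PS.aden]
      rw [PS.aden_map g p η]
end

theorem TS.self_mem_subT {A : Type} (t : TS A) : t ∈ t.subT := by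
  cases t <;> simp [TS.subT]

theorem PS.self_mem_subP {A : Type} (p : PS A) : p ∈ p.subP := by
  cases p <;> simp [PS.subP]

end MonoCongr
section AlphaOps

variable {A : Type}

theorem alpha_union (L₁ L₂ : Set (Word A)) : alpha (L₁ ∪ L₂) = alpha L₁ ⊔ alpha L₂ := by
  apply prodPropExt
  · rw [Prod.fst_sup]
    show (L₁ ∪ L₂).Nonempty ↔ L₁.Nonempty ⊔ L₂.Nonempty
    rw [show (L₁.Nonempty ⊔ L₂.Nonempty) = (L₁.Nonempty ∨ L₂.Nonempty) from
      congrFun₂ sup_Prop_eq _ _]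
    exact Set.union_nonempty
  · rw [Prod.snd_sup]
    rw [show ((alpha L₁).2 ⊔ (alpha L₂).2) = ((alpha L₁).2 ∨ (alpha L₂).2) from
      congrFun₂ sup_Prop_eq _ _]
    show (∃ w ∈ L₁ ∪ L₂, w ≠ Word.eps A) ↔
      (∃ w ∈ L₁, w ≠ Word.eps A) ∨ (∃ w ∈ L₂, w ≠ Word.eps A)
    constructor
    · rintro ⟨w, hw | hw, hne⟩
      · exact Or.inl ⟨w, hw, hne⟩
      · exact Or.inr ⟨w, hw, hne⟩
    · rintro (⟨w, hw, hne⟩ | ⟨w, hw, hne⟩)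
      · exact ⟨w, Or.inl hw, hne⟩
      · exact ⟨w, Or.inr hw, hne⟩

theorem alphaP_union (L₁ L₂ : Set (Word A × Word A)) :
    alphaP (L₁ ∪ L₂) = alphaP L₁ ⊔ alphaP L₂ := by
  apply prodPropExt
  · rw [Prod.fst_sup]
    show (L₁ ∪ L₂).Nonempty ↔ L₁.Nonempty ⊔ L₂.Nonempty
    rw [show (L₁.Nonempty ⊔ L₂.Nonempty) = (L₁.Nonempty ∨ L₂.Nonempty) from
      congrFun₂ sup_Prop_eq _ _]
    exact Set.union_nonempty
  · rw [Prod.snd_sup]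
    rw [show ((alphaP L₁).2 ⊔ (alphaP L₂).2) = ((alphaP L₁).2 ∨ (alphaP L₂).2) from
      congrFun₂ sup_Prop_eq _ _]
    show (∃ p ∈ L₁ ∪ L₂, (p.1 ≠ Word.eps A ∨ p.2 ≠ Word.eps A)) ↔ _
    constructor
    · rintro ⟨w, hw | hw, hne⟩
      · exact Or.inl ⟨w, hw, hne⟩
      · exact Or.inr ⟨w, hw, hne⟩
    · rintro (⟨w, hw, hne⟩ | ⟨w, hw, hne⟩)
      · exact ⟨w, Or.inl hw, hne⟩
      · exact ⟨w, Or.inr hw, hne⟩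

theorem alpha_conc (L₁ L₂ : Set (Word A)) :
    alpha (Lang.conc L₁ L₂) = aconc (alpha L₁) (alpha L₂) := by
  apply prodPropExt
  · show (Lang.conc L₁ L₂).Nonempty ↔ L₁.Nonempty ∧ L₂.Nonempty
    constructor
    · rintro ⟨w, u, hu, v, hv, rfl⟩
      exact ⟨⟨u, hu⟩, ⟨v, hv⟩⟩
    · rintro ⟨⟨u, hu⟩, ⟨v, hv⟩⟩
      exact ⟨_, u, hu, v, hv, rfl⟩
  · show (∃ w ∈ Lang.conc L₁ L₂, w ≠ Word.eps A) ↔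
      ((∃ w ∈ L₁, w ≠ Word.eps A) ∧ L₂.Nonempty) ∨
        (L₁.Nonempty ∧ (∃ w ∈ L₂, w ≠ Word.eps A))
    constructor
    · rintro ⟨w, ⟨u, hu, v, hv, rfl⟩, hne⟩
      rcases not_and_or.mp (fun hc => hne (Word.append_eq_eps_iff.mpr ⟨hc.1, hc.2⟩)) with h | h
      · exact Or.inl ⟨⟨u, hu, h⟩, ⟨v, hv⟩⟩
      · exact Or.inr ⟨⟨u, hu⟩, ⟨v, hv, h⟩⟩
    · rintro (⟨⟨u, hu, hune⟩, ⟨v, hv⟩⟩ | ⟨⟨u, hu⟩, ⟨v, hv, hvne⟩⟩)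
      · exact ⟨_, ⟨u, hu, v, hv, rfl⟩, fun hc => hune (Word.append_eq_eps_iff.mp hc).1⟩
      · exact ⟨_, ⟨u, hu, v, hv, rfl⟩, fun hc => hvne (Word.append_eq_eps_iff.mp hc).2⟩

theorem alphaP_prod (L₁ L₂ : Set (Word A)) :
    alphaP (PairLang.prod L₁ L₂) = aconc (alpha L₁) (alpha L₂) := by
  apply prodPropExt
  · show (PairLang.prod L₁ L₂).Nonempty ↔ L₁.Nonempty ∧ L₂.Nonempty
    constructor
    · rintro ⟨⟨u, v⟩, hu, hv⟩
      exact ⟨⟨u, hu⟩, ⟨v, hv⟩⟩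
    · rintro ⟨⟨u, hu⟩, ⟨v, hv⟩⟩
      exact ⟨(u, v), hu, hv⟩
  · show (∃ p ∈ PairLang.prod L₁ L₂, (p.1 ≠ Word.eps A ∨ p.2 ≠ Word.eps A)) ↔
      ((∃ w ∈ L₁, w ≠ Word.eps A) ∧ L₂.Nonempty) ∨
        (L₁.Nonempty ∧ (∃ w ∈ L₂, w ≠ Word.eps A))
    constructor
    · rintro ⟨⟨u, v⟩, ⟨hu, hv⟩, h | h⟩
      · exact Or.inl ⟨⟨u, hu, h⟩, ⟨v, hv⟩⟩
      · exact Or.inr ⟨⟨u, hu⟩, ⟨v, hv, h⟩⟩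
    · rintro (⟨⟨u, hu, hune⟩, ⟨v, hv⟩⟩ | ⟨⟨u, hu⟩, ⟨v, hv, hvne⟩⟩)
      · exact ⟨(u, v), ⟨hu, hv⟩, Or.inl hune⟩
      · exact ⟨(u, v), ⟨hu, hv⟩, Or.inr hvne⟩

theorem alphaP_conc (L₁ L₂ : Set (Word A × Word A)) :
    alphaP (PairLang.conc L₁ L₂) = aconc (alphaP L₁) (alphaP L₂) := by
  apply prodPropExt
  · show (PairLang.conc L₁ L₂).Nonempty ↔ L₁.Nonempty ∧ L₂.Nonempty
    constructor
    · rintro ⟨w, p, hp, q, hq, rfl⟩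
      exact ⟨⟨p, hp⟩, ⟨q, hq⟩⟩
    · rintro ⟨⟨p, hp⟩, ⟨q, hq⟩⟩
      exact ⟨_, p, hp, q, hq, rfl⟩
  · show (∃ r ∈ PairLang.conc L₁ L₂, (r.1 ≠ Word.eps A ∨ r.2 ≠ Word.eps A)) ↔
      ((∃ p ∈ L₁, (p.1 ≠ Word.eps A ∨ p.2 ≠ Word.eps A)) ∧ L₂.Nonempty) ∨
        (L₁.Nonempty ∧ (∃ q ∈ L₂, (q.1 ≠ Word.eps A ∨ q.2 ≠ Word.eps A)))
    constructor
    · rintro ⟨r, ⟨p, hp, q, hq, rfl⟩, hne⟩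
      rcases hne with h | h
      · rcases not_and_or.mp (fun hc => h (Word.append_eq_eps_iff.mpr ⟨hc.1, hc.2⟩)) with h' | h'
        · exact Or.inl ⟨⟨p, hp, Or.inl h'⟩, ⟨q, hq⟩⟩
        · exact Or.inr ⟨⟨p, hp⟩, ⟨q, hq, Or.inl h'⟩⟩
      · rcases not_and_or.mp (fun hc => h (Word.append_eq_eps_iff.mpr ⟨hc.1, hc.2⟩)) with h' | h'
        · exact Or.inr ⟨⟨p, hp⟩, ⟨q, hq, Or.inr h'⟩⟩
        · exact Or.inl ⟨⟨p, hp, Or.inr h'⟩, ⟨q, hq⟩⟩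
    · rintro (⟨⟨p, hp, hpne⟩, ⟨q, hq⟩⟩ | ⟨⟨p, hp⟩, ⟨q, hq, hqne⟩⟩)
      · refine ⟨_, ⟨p, hp, q, hq, rfl⟩, ?_⟩
        rcases hpne with h | h
        · exact Or.inl (fun hc => h (Word.append_eq_eps_iff.mp hc).1)
        · exact Or.inr (fun hc => h (Word.append_eq_eps_iff.mp hc).2)
      · refine ⟨_, ⟨p, hp, q, hq, rfl⟩, ?_⟩
        rcases hqne with h | h
        · exact Or.inl (fun hc => h (Word.append_eq_eps_iff.mp hc).2)
        · exact Or.inr (fun hc => h (Word.append_eq_eps_iff.mp hc).1)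

theorem foldr_pairMul_ne {l : List (Word A × Word A)}
    (h : (l.foldr PairLang.pairMul (Word.eps A, Word.eps A)).1 ≠ Word.eps A ∨
      (l.foldr PairLang.pairMul (Word.eps A, Word.eps A)).2 ≠ Word.eps A) :
    ∃ p ∈ l, (p.1 ≠ Word.eps A ∨ p.2 ≠ Word.eps A) := by
  induction l with
  | nil => rcases h with h | h <;> exact absurd rfl h
  | cons p l ih =>
    simp only [List.foldr_cons] at h
    rcases h with h | h
    · rcases not_and_or.mp (fun hc => h (Word.append_eq_eps_iff.mpr ⟨hc.1, hc.2⟩)) with h' | h'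
      · exact ⟨p, List.mem_cons_self, Or.inl h'⟩
      · obtain ⟨q, hq, hqne⟩ := ih (Or.inl h')
        exact ⟨q, List.mem_cons_of_mem _ hq, hqne⟩
    · rcases not_and_or.mp (fun hc => h (Word.append_eq_eps_iff.mpr ⟨hc.1, hc.2⟩)) with h' | h'
      · obtain ⟨q, hq, hqne⟩ := ih (Or.inr h')
        exact ⟨q, List.mem_cons_of_mem _ hq, hqne⟩
      · exact ⟨p, List.mem_cons_self, Or.inr h'⟩

theorem alphaP_star (L : Set (Word A × Word A)) :
    alphaP (PairLang.star L) = (True, (alphaP L).2) := by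
  apply prodPropExt
  · show (PairLang.star L).Nonempty ↔ True
    simp only [iff_true]
    exact ⟨_, [], by simp, rfl⟩
  · show (∃ r ∈ PairLang.star L, (r.1 ≠ Word.eps A ∨ r.2 ≠ Word.eps A)) ↔
      (∃ p ∈ L, (p.1 ≠ Word.eps A ∨ p.2 ≠ Word.eps A))
    constructor
    · rintro ⟨r, ⟨l, hl, rfl⟩, hne⟩
      obtain ⟨p, hp, hpne⟩ := foldr_pairMul_ne hne
      exact ⟨p, hl p hp, hpne⟩
    · rintro ⟨p, hp, hpne⟩
      refine ⟨PairLang.pairMul p (Word.eps A, Word.eps A),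
        ⟨[p], by simpa using hp, by simp [List.foldr]⟩, ?_⟩
      rcases hpne with h | h
      · exact Or.inl (fun hc => h (Word.append_eq_eps_iff.mp hc).1)
      · exact Or.inr (fun hc => h (Word.append_eq_eps_iff.mp hc).2)

theorem alpha_omegaPow (L : Set (Word A × Word A)) :
    alpha (PairLang.omegaPow L) = alphaP L := by
  apply prodPropExt
  · show (PairLang.omegaPow L).Nonempty ↔ L.Nonempty
    constructor
    · rintro ⟨w, f, hf, rfl⟩
      exact ⟨f 0, hf 0⟩
    · rintro ⟨p, hp⟩
      exact ⟨_, fun _ => p, fun _ => hp, rfl⟩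
  · show (∃ w ∈ PairLang.omegaPow L, w ≠ Word.eps A) ↔
      (∃ p ∈ L, (p.1 ≠ Word.eps A ∨ p.2 ≠ Word.eps A))
    constructor
    · rintro ⟨w, ⟨f, hf, rfl⟩, hne⟩
      obtain ⟨n, h⟩ := PairLang.omegaWord_ne_eps_iff.mp hne
      exact ⟨f n, hf n, h⟩
    · rintro ⟨p, hp, hpne⟩
      exact ⟨_, ⟨fun _ => p, fun _ => hp, rfl⟩, PairLang.omegaWord_ne_eps_iff.mpr ⟨0, hpne⟩⟩

theorem alpha_letter (a : A) : alpha ({Word.letter a} : Set (Word A)) = (True, True) := by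
  apply prodPropExt
  · show ({Word.letter a} : Set (Word A)).Nonempty ↔ True
    simp
  · simp only [iff_true]
    exact ⟨Word.letter a, rfl, Word.letter_ne_eps a⟩

theorem alpha_eps_singleton : alpha ({Word.eps A} : Set (Word A)) = (True, False) := by
  apply prodPropExt
  · show ({Word.eps A} : Set (Word A)).Nonempty ↔ True
    simp
  · simp only [iff_false]
    rintro ⟨w, rfl, hne⟩
    exact hne rfl

end AlphaOps
section Spec

theorem update_val_le {ι : Type*} [DecidableEq ι] {β : Type*} [Preorder β]
    (η : ι → β) (x : ι) {a b : β} (h : a ≤ b) :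
    ∀ y, Function.update η x a y ≤ Function.update η x b y := by
  intro y
  rcases eq_or_ne y x with rfl | hne
  · simpa using h
  · simp [Function.update_apply, hne]

theorem alpha_update {A : Type} (ρ : ℕ → Set (Word A)) (x : ℕ) (L : Set (Word A)) :
    (fun y => alpha (Function.update ρ x L y)) =
      Function.update (fun y => alpha (ρ y)) x (alpha L) := by
  funext y
  rcases eq_or_ne y x with rfl | hne
  · simp
  · simp [Function.update_apply, hne]

mutual
  theorem TS.aden_spec {A : Type} : (t : TS A) → (ρ : ℕ → Set (Word A)) →
      alpha (t.den ρ) = t.aden (fun x => alpha (ρ x))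
    | .letter a, ρ => by
      simp only [TS.den, TS.aden]
      exact alpha_letter a
    | .eps, ρ => by
      simp only [TS.den, TS.aden]
      exact alpha_eps_singleton
    | .var x, ρ => rfl
    | .add s t, ρ => by
      simp only [TS.den, TS.aden]
      rw [alpha_union, TS.aden_spec s ρ, TS.aden_spec t ρ]
    | .mul s t, ρ => by
      simp only [TS.den, TS.aden]
      rw [alpha_conc, TS.aden_spec s ρ, TS.aden_spec t ρ]
    | .mu x s, ρ => by
      simp only [TS.den, TS.aden]
      exact lfp_transfer alpha (fun L => s.den (Function.update ρ x L))
        (fun d => s.aden (Function.update (fun y => alpha (ρ y)) x d))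
        alpha_sSup
        (fun a b hab => TS.den_mono s (update_val_le ρ x hab))
        (fun a b hab => TS.aden_mono s (update_val_le _ x hab))
        (fun L => by rw [TS.aden_spec s (Function.update ρ x L), alpha_update])
    | .omega p, ρ => by
      simp only [TS.den, TS.aden]
      rw [alpha_omegaPow, PS.aden_spec p ρ]

  theorem PS.aden_spec {A : Type} : (p : PS A) → (ρ : ℕ → Set (Word A)) →
      alphaP (p.den ρ) = p.aden (fun x => alpha (ρ x))
    | .pair s t, ρ => by
      simp only [PS.den, PS.aden]
      rw [alphaP_prod, TS.aden_spec s ρ, TS.aden_spec t ρ]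
    | .add p q, ρ => by
      simp only [PS.den, PS.aden]
      rw [alphaP_union, PS.aden_spec p ρ, PS.aden_spec q ρ]
    | .mul p q, ρ => by
      simp only [PS.den, PS.aden]
      rw [alphaP_conc, PS.aden_spec p ρ, PS.aden_spec q ρ]
    | .star p, ρ => by
      simp only [PS.den, PS.aden]
      rw [alphaP_star, PS.aden_spec p ρ]
end

theorem TS.alpha_denL {A : Type} (t : TS A) :
    alpha t.denL = t.aden (fun _ => ((True : Prop), (True : Prop))) := by
  rw [TS.denL, TS.aden_spec, show (fun x => alpha ({Word.letter (Sum.inr x)} :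
    Set (Word (A ⊕ ℕ)))) = (fun _ : ℕ => ((True : Prop), (True : Prop))) from
    funext fun x => alpha_letter _, TS.aden_map]

theorem TS.aden_eq_top {A : Type} {t : TS A} (h1 : t.denL ≠ ∅)
    (h2 : t.denL ≠ {Word.eps (A ⊕ ℕ)}) :
    t.aden (fun _ => ((True : Prop), (True : Prop))) = (True, True) := by
  rw [← TS.alpha_denL]
  apply prodPropExt
  · show t.denL.Nonempty ↔ True
    simpa using Set.nonempty_iff_ne_empty.mpr h1
  · show (∃ w ∈ t.denL, w ≠ Word.eps (A ⊕ ℕ)) ↔ True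
    simp only [iff_true]
    by_contra hno
    push_neg at hno
    exact h2 (Set.eq_singleton_iff_nonempty_unique_mem.mpr
      ⟨Set.nonempty_iff_ne_empty.mpr h1, hno⟩)

theorem TS.alpha_den_eq_top {A : Type} {t : TS A} (h1 : t.denL ≠ ∅)
    (h2 : t.denL ≠ {Word.eps (A ⊕ ℕ)}) (ρ : ℕ → Set (Word A))
    (hρ : ∀ x ∈ t.free, alpha (ρ x) = ((True : Prop), (True : Prop))) :
    alpha (t.den ρ) = (True, True) := by
  rw [TS.aden_spec, TS.aden_congr t (fun x hx => hρ x hx), TS.aden_eq_top h1 h2]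

theorem TS.den_nonempty {A : Type} {t : TS A} (h1 : t.denL ≠ ∅)
    (h2 : t.denL ≠ {Word.eps (A ⊕ ℕ)}) (ρ : ℕ → Set (Word A))
    (hρ : ∀ x ∈ t.free, alpha (ρ x) = ((True : Prop), (True : Prop))) :
    (t.den ρ).Nonempty :=
  of_eq_true (congrArg Prod.fst (TS.alpha_den_eq_top h1 h2 ρ hρ))

theorem TS.den_has_ne_eps {A : Type} {t : TS A} (h1 : t.denL ≠ ∅)
    (h2 : t.denL ≠ {Word.eps (A ⊕ ℕ)}) (ρ : ℕ → Set (Word A))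
    (hρ : ∀ x ∈ t.free, alpha (ρ x) = ((True : Prop), (True : Prop))) :
    ∃ w ∈ t.den ρ, w ≠ Word.eps A :=
  of_eq_true (congrArg Prod.snd (TS.alpha_den_eq_top h1 h2 ρ hρ))

end Spec
section Backward

variable {A : Type}

theorem foldr_pairMul_wo {l : List (Word A × Word A)}
    (h : ∀ q ∈ l, q.1.IsWellOrdered ∧ q.2 = Word.eps A) :
    (l.foldr PairLang.pairMul (Word.eps A, Word.eps A)).1.IsWellOrdered ∧
      (l.foldr PairLang.pairMul (Word.eps A, Word.eps A)).2 = Word.eps A := by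
  induction l with
  | nil => exact ⟨Word.eps_isWellOrdered, rfl⟩
  | cons p l ih =>
    have hp := h p (List.mem_cons_self)
    have ihl := ih (fun q hq => h q (List.mem_cons_of_mem _ hq))
    simp only [List.foldr_cons]
    constructor
    · exact Word.append_isWellOrdered hp.1 ihl.1
    · show Word.append _ _ = _
      rw [ihl.2, hp.2]
      exact Word.eps_append_eps

mutual
  theorem TS.den_wo {A : Type} : (t : TS A) → (ρ : ℕ → Set (Word A)) →
      (∀ x, ∀ w ∈ ρ x, Word.IsWellOrdered w) →
      (∀ t₁ t₂ : TS A, PS.pair t₁ t₂ ∈ t.subP → t₂ = TS.eps) →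
      ∀ w ∈ t.den ρ, w.IsWellOrdered
    | .letter a, ρ, hρ, hpair, w, hw => by
      rw [Set.eq_of_mem_singleton hw]
      exact Word.letter_isWellOrdered a
    | .eps, ρ, hρ, hpair, w, hw => by
      rw [Set.eq_of_mem_singleton hw]
      exact Word.eps_isWellOrdered
    | .var x, ρ, hρ, hpair, w, hw => hρ x w hw
    | .add s t, ρ, hρ, hpair, w, hw => by
      rcases hw with hw | hw
      · exact TS.den_wo s ρ hρ (fun a b h => hpair a b (Set.mem_union_left _ h)) w hw
      · exact TS.den_wo t ρ hρ (fun a b h => hpair a b (Set.mem_union_right _ h)) w hw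
    | .mul s t, ρ, hρ, hpair, w, hw => by
      obtain ⟨u, hu, v, hv, rfl⟩ := hw
      exact Word.append_isWellOrdered
        (TS.den_wo s ρ hρ (fun a b h => hpair a b (Set.mem_union_left _ h)) u hu)
        (TS.den_wo t ρ hρ (fun a b h => hpair a b (Set.mem_union_right _ h)) v hv)
    | .mu x s, ρ, hρ, hpair, w, hw => by
      have hmem : {w : Word A | w.IsWellOrdered} ∈
          {L : Set (Word A) | s.den (Function.update ρ x L) ⊆ L} := by
        intro w' hw'
        refine TS.den_wo s (Function.update ρ x {w : Word A | w.IsWellOrdered}) ?_ hpair w' hw'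
        intro y w'' hw''
        rcases eq_or_ne y x with rfl | hne
        · rw [Function.update_self] at hw''
          exact hw''
        · rw [Function.update_of_ne hne] at hw''
          exact hρ y w'' hw''
      exact sInf_le hmem hw
    | .omega p, ρ, hρ, hpair, w, hw => by
      obtain ⟨f, hf, rfl⟩ := hw
      have key := fun n => PS.den_wo p ρ hρ
        (fun a b h => hpair a b (Set.mem_insert_iff.mpr (Or.inr h))) (f n) (hf n)
      exact PairLang.omegaWord_wo (fun n => (key n).1) (fun n => (key n).2)

  theorem PS.den_wo {A : Type} : (p : PS A) → (ρ : ℕ → Set (Word A)) →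
      (∀ x, ∀ w ∈ ρ x, Word.IsWellOrdered w) →
      (∀ t₁ t₂ : TS A, PS.pair t₁ t₂ ∈ p.subP → t₂ = TS.eps) →
      ∀ r ∈ p.den ρ, r.1.IsWellOrdered ∧ r.2 = Word.eps A
    | .pair s t, ρ, hρ, hpair, r, hr => by
      obtain ⟨hu, hv⟩ := hr
      have ht : t = TS.eps := hpair s t (PS.self_mem_subP _)
      subst ht
      refine ⟨TS.den_wo s ρ hρ (fun a b h => hpair a b
        (Set.mem_insert_iff.mpr (Or.inr (Set.mem_union_left _ h)))) r.1 hu, ?_⟩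
      exact Set.eq_of_mem_singleton hv
    | .add p q, ρ, hρ, hpair, r, hr => by
      rcases hr with hr | hr
      · exact PS.den_wo p ρ hρ (fun a b h => hpair a b
          (Set.mem_insert_iff.mpr (Or.inr (Set.mem_union_left _ h)))) r hr
      · exact PS.den_wo q ρ hρ (fun a b h => hpair a b
          (Set.mem_insert_iff.mpr (Or.inr (Set.mem_union_right _ h)))) r hr
    | .mul p q, ρ, hρ, hpair, r, hr => by
      obtain ⟨a, ha, b, hb, rfl⟩ := hr
      have hA := PS.den_wo p ρ hρ (fun a' b' h => hpair a' b'
        (Set.mem_insert_iff.mpr (Or.inr (Set.mem_union_left _ h)))) a ha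
      have hB := PS.den_wo q ρ hρ (fun a' b' h => hpair a' b'
        (Set.mem_insert_iff.mpr (Or.inr (Set.mem_union_right _ h)))) b hb
      constructor
      · exact Word.append_isWellOrdered hA.1 hB.1
      · show Word.append _ _ = _
        rw [hA.2, hB.2]
        exact Word.eps_append_eps
    | .star p, ρ, hρ, hpair, r, hr => by
      obtain ⟨l, hl, rfl⟩ := hr
      exact foldr_pairMul_wo (fun q hq => PS.den_wo p ρ hρ (fun a b h => hpair a b
        (Set.mem_insert_iff.mpr (Or.inr h))) q (hl q hq))
end

end Backward
section Forward

variable {A : Type}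

theorem PS.alphaP_denL (p : PS A) :
    alphaP p.denL = p.aden (fun _ => ((True : Prop), (True : Prop))) := by
  rw [PS.denL, PS.aden_spec, show (fun x => alpha ({Word.letter (Sum.inr x)} :
    Set (Word (A ⊕ ℕ)))) = (fun _ : ℕ => ((True : Prop), (True : Prop))) from
    funext fun x => alpha_letter _, PS.aden_map]

theorem PS.den_nonempty {p : PS A} (h1 : p.denL ≠ ∅) (ρ : ℕ → Set (Word A))
    (hρ : ∀ x ∈ p.free, alpha (ρ x) = ((True : Prop), (True : Prop))) :
    (p.den ρ).Nonempty := by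
  have h := PS.aden_spec p ρ
  rw [PS.aden_congr p hρ, ← PS.alphaP_denL] at h
  exact (iff_of_eq (congrArg Prod.fst h)).mpr (Set.nonempty_iff_ne_empty.mpr h1)

theorem TS.den_nonempty' {t : TS A} (h1 : t.denL ≠ ∅)
    (h2 : t.denL = {Word.eps (A ⊕ ℕ)} → t = TS.eps) (ρ : ℕ → Set (Word A))
    (hρ : ∀ x ∈ t.free, alpha (ρ x) = ((True : Prop), (True : Prop))) :
    (t.den ρ).Nonempty := by
  by_cases he : t = TS.eps
  · subst he
    exact ⟨Word.eps A, rfl⟩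
  · exact TS.den_nonempty h1 (fun h => he (h2 h)) ρ hρ

theorem TS.mu_prefix (s : TS A) (x : ℕ) (ρ : ℕ → Set (Word A)) :
    s.den (Function.update ρ x ((TS.mu x s).den ρ)) ⊆ (TS.mu x s).den ρ := by
  simp only [TS.den]
  apply le_sInf
  intro L hL
  exact le_trans (TS.den_mono s (update_val_le ρ x (sInf_le hL))) hL

theorem ne_eps_of_not_wo {w : Word A} (h : ¬ w.IsWellOrdered) : w ≠ Word.eps A :=
  fun hc => h (hc ▸ Word.eps_isWellOrdered)

mutual
  theorem TS.den_bad {A : Type} : (t : TS A) → (ρ : ℕ → Set (Word A)) → (t₁ t₂ : TS A) →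
      (t₂ ≠ TS.eps) → (PS.pair t₁ t₂ ∈ t.subP) →
      (∀ s ∈ t.subT, s.denL ≠ ∅ ∧ (s.denL = {Word.eps (A ⊕ ℕ)} → s = TS.eps)) →
      (∀ q ∈ t.subP, q.denL ≠ ∅) →
      (∀ x ∈ t.free, alpha (ρ x) = ((True : Prop), (True : Prop))) →
      ∃ w ∈ t.den ρ, ¬ w.IsWellOrdered
    | .letter a, ρ, t₁, t₂, hne2, hmem, hT, hP, hρ => absurd hmem (Set.notMem_empty _)
    | .eps, ρ, t₁, t₂, hne2, hmem, hT, hP, hρ => absurd hmem (Set.notMem_empty _)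
    | .var x, ρ, t₁, t₂, hne2, hmem, hT, hP, hρ => absurd hmem (Set.notMem_empty _)
    | .add s t, ρ, t₁, t₂, hne2, hmem, hT, hP, hρ => by
      rcases hmem with hmem | hmem
      · obtain ⟨w, hw, hbad⟩ := TS.den_bad s ρ t₁ t₂ hne2 hmem
          (fun u hu => hT u (Set.mem_insert_iff.mpr (Or.inr (Set.mem_union_left _ hu))))
          (fun q hq => hP q (Set.mem_union_left _ hq))
          (fun x hx => hρ x (Set.mem_union_left _ hx))
        exact ⟨w, Set.mem_union_left _ hw, hbad⟩
      · obtain ⟨w, hw, hbad⟩ := TS.den_bad t ρ t₁ t₂ hne2 hmem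
          (fun u hu => hT u (Set.mem_insert_iff.mpr (Or.inr (Set.mem_union_right _ hu))))
          (fun q hq => hP q (Set.mem_union_right _ hq))
          (fun x hx => hρ x (Set.mem_union_right _ hx))
        exact ⟨w, Set.mem_union_right _ hw, hbad⟩
    | .mul s t, ρ, t₁, t₂, hne2, hmem, hT, hP, hρ => by
      rcases hmem with hmem | hmem
      · obtain ⟨w, hw, hbad⟩ := TS.den_bad s ρ t₁ t₂ hne2 hmem
          (fun u hu => hT u (Set.mem_insert_iff.mpr (Or.inr (Set.mem_union_left _ hu))))
          (fun q hq => hP q (Set.mem_union_left _ hq))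
          (fun x hx => hρ x (Set.mem_union_left _ hx))
        obtain ⟨v, hv⟩ := TS.den_nonempty'
          (hT t (Set.mem_insert_iff.mpr (Or.inr (Set.mem_union_right _ (TS.self_mem_subT t))))).1
          (hT t (Set.mem_insert_iff.mpr (Or.inr (Set.mem_union_right _ (TS.self_mem_subT t))))).2
          ρ (fun x hx => hρ x (Set.mem_union_right _ hx))
        exact ⟨Word.append w v, ⟨w, hw, v, hv, rfl⟩, Word.append_not_wo_left v hbad⟩
      · obtain ⟨w, hw, hbad⟩ := TS.den_bad t ρ t₁ t₂ hne2 hmem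
          (fun u hu => hT u (Set.mem_insert_iff.mpr (Or.inr (Set.mem_union_right _ hu))))
          (fun q hq => hP q (Set.mem_union_right _ hq))
          (fun x hx => hρ x (Set.mem_union_right _ hx))
        obtain ⟨v, hv⟩ := TS.den_nonempty'
          (hT s (Set.mem_insert_iff.mpr (Or.inr (Set.mem_union_left _ (TS.self_mem_subT s))))).1
          (hT s (Set.mem_insert_iff.mpr (Or.inr (Set.mem_union_left _ (TS.self_mem_subT s))))).2
          ρ (fun x hx => hρ x (Set.mem_union_left _ hx))
        exact ⟨Word.append v w, ⟨v, hv, w, hw, rfl⟩, Word.append_not_wo_right v hbad⟩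
    | .mu x s, ρ, t₁, t₂, hne2, hmem, hT, hP, hρ => by
      have hself := hT (TS.mu x s) (TS.self_mem_subT _)
      have hLtop : alpha ((TS.mu x s).den ρ) = ((True : Prop), (True : Prop)) :=
        TS.alpha_den_eq_top hself.1
          (fun h => absurd (hself.2 h) (by intro hc; cases hc)) ρ hρ
      have hρ' : ∀ y ∈ s.free, alpha (Function.update ρ x ((TS.mu x s).den ρ) y) =
          ((True : Prop), (True : Prop)) := by
        intro y hy
        rcases eq_or_ne y x with rfl | hne
        · rw [Function.update_self]
          exact hLtop
        · rw [Function.update_of_ne hne]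
          exact hρ y ⟨hy, hne⟩
      obtain ⟨w, hw, hbad⟩ := TS.den_bad s (Function.update ρ x ((TS.mu x s).den ρ))
        t₁ t₂ hne2 hmem
        (fun u hu => hT u (Set.mem_insert_iff.mpr (Or.inr hu))) hP hρ'
      exact ⟨w, TS.mu_prefix s x ρ hw, hbad⟩
    | .omega p, ρ, t₁, t₂, hne2, hmem, hT, hP, hρ => by
      have hmem' : PS.pair t₁ t₂ ∈ p.subP := by
        rcases hmem with heq | h
        · rw [← heq]
          exact PS.self_mem_subP _
        · exact h
      obtain ⟨r, hr, hbad⟩ := PS.den_bad p ρ t₁ t₂ hne2 hmem'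
        (fun u hu => hT u (Set.mem_insert_iff.mpr (Or.inr hu)))
        (fun q hq => hP q (Set.mem_insert_iff.mpr (Or.inr hq))) hρ
      refine ⟨PairLang.omegaWord (fun _ => r), ⟨fun _ => r, fun _ => hr, rfl⟩, ?_⟩
      rcases hbad with h | h
      · exact PairLang.omegaWord_not_wo_of_fst 0 h
      · exact PairLang.omegaWord_not_wo_of_snd (fun _ => h)

  theorem PS.den_bad {A : Type} : (p : PS A) → (ρ : ℕ → Set (Word A)) → (t₁ t₂ : TS A) →
      (t₂ ≠ TS.eps) → (PS.pair t₁ t₂ ∈ p.subP) →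
      (∀ s ∈ p.subT, s.denL ≠ ∅ ∧ (s.denL = {Word.eps (A ⊕ ℕ)} → s = TS.eps)) →
      (∀ q ∈ p.subP, q.denL ≠ ∅) →
      (∀ x ∈ p.free, alpha (ρ x) = ((True : Prop), (True : Prop))) →
      ∃ r ∈ p.den ρ, (¬ r.1.IsWellOrdered ∨ r.2 ≠ Word.eps A)
    | .pair s t, ρ, t₁, t₂, hne2, hmem, hT, hP, hρ => by
      rcases hmem with heq | (hmem | hmem)
      · have ht : t₂ = t := (PS.pair.inj heq).2
        obtain ⟨u, hu⟩ := TS.den_nonempty'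
          (hT s (Set.mem_union_left _ (TS.self_mem_subT _))).1
          (hT s (Set.mem_union_left _ (TS.self_mem_subT _))).2
          ρ (fun x hx => hρ x (Set.mem_union_left _ hx))
        obtain ⟨v, hv, hvne⟩ := TS.den_has_ne_eps
          (hT t (Set.mem_union_right _ (TS.self_mem_subT _))).1
          (fun h => (ht ▸ hne2) ((hT t (Set.mem_union_right _ (TS.self_mem_subT _))).2 h))
          ρ (fun x hx => hρ x (Set.mem_union_right _ hx))
        exact ⟨(u, v), ⟨hu, hv⟩, Or.inr hvne⟩
      · obtain ⟨w, hw, hbad⟩ := TS.den_bad s ρ t₁ t₂ hne2 hmem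
          (fun u hu => hT u (Set.mem_union_left _ hu))
          (fun q hq => hP q (Set.mem_insert_iff.mpr (Or.inr (Set.mem_union_left _ hq))))
          (fun x hx => hρ x (Set.mem_union_left _ hx))
        obtain ⟨v, hv⟩ := TS.den_nonempty'
          (hT t (Set.mem_union_right _ (TS.self_mem_subT _))).1
          (hT t (Set.mem_union_right _ (TS.self_mem_subT _))).2
          ρ (fun x hx => hρ x (Set.mem_union_right _ hx))
        exact ⟨(w, v), ⟨hw, hv⟩, Or.inl hbad⟩
      · obtain ⟨w, hw, hbad⟩ := TS.den_bad t ρ t₁ t₂ hne2 hmem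
          (fun u hu => hT u (Set.mem_union_right _ hu))
          (fun q hq => hP q (Set.mem_insert_iff.mpr (Or.inr (Set.mem_union_right _ hq))))
          (fun x hx => hρ x (Set.mem_union_right _ hx))
        obtain ⟨u, hu⟩ := TS.den_nonempty'
          (hT s (Set.mem_union_left _ (TS.self_mem_subT _))).1
          (hT s (Set.mem_union_left _ (TS.self_mem_subT _))).2
          ρ (fun x hx => hρ x (Set.mem_union_left _ hx))
        exact ⟨(u, w), ⟨hu, hw⟩, Or.inr (ne_eps_of_not_wo hbad)⟩
    | .add p q, ρ, t₁, t₂, hne2, hmem, hT, hP, hρ => by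
      rcases hmem with heq | (hmem | hmem)
      · exact absurd heq (by intro hc; cases hc)
      · obtain ⟨r, hr, hbad⟩ := PS.den_bad p ρ t₁ t₂ hne2 hmem
          (fun u hu => hT u (Set.mem_union_left _ hu))
          (fun q' hq => hP q' (Set.mem_insert_iff.mpr (Or.inr (Set.mem_union_left _ hq))))
          (fun x hx => hρ x (Set.mem_union_left _ hx))
        exact ⟨r, Set.mem_union_left _ hr, hbad⟩
      · obtain ⟨r, hr, hbad⟩ := PS.den_bad q ρ t₁ t₂ hne2 hmem
          (fun u hu => hT u (Set.mem_union_right _ hu))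
          (fun q' hq => hP q' (Set.mem_insert_iff.mpr (Or.inr (Set.mem_union_right _ hq))))
          (fun x hx => hρ x (Set.mem_union_right _ hx))
        exact ⟨r, Set.mem_union_right _ hr, hbad⟩
    | .mul p q, ρ, t₁, t₂, hne2, hmem, hT, hP, hρ => by
      rcases hmem with heq | (hmem | hmem)
      · exact absurd heq (by intro hc; cases hc)
      · obtain ⟨r, hr, hbad⟩ := PS.den_bad p ρ t₁ t₂ hne2 hmem
          (fun u hu => hT u (Set.mem_union_left _ hu))
          (fun q' hq => hP q' (Set.mem_insert_iff.mpr (Or.inr (Set.mem_union_left _ hq))))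
          (fun x hx => hρ x (Set.mem_union_left _ hx))
        obtain ⟨r', hr'⟩ := PS.den_nonempty
          (hP q (Set.mem_insert_iff.mpr (Or.inr (Set.mem_union_right _ (PS.self_mem_subP _)))))
          ρ (fun x hx => hρ x (Set.mem_union_right _ hx))
        refine ⟨PairLang.pairMul r r', ⟨r, hr, r', hr', rfl⟩, ?_⟩
        rcases hbad with h | h
        · exact Or.inl (Word.append_not_wo_left r'.1 h)
        · exact Or.inr (fun hc => h (Word.append_eq_eps_iff.mp hc).2)
      · obtain ⟨r, hr, hbad⟩ := PS.den_bad q ρ t₁ t₂ hne2 hmem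
          (fun u hu => hT u (Set.mem_union_right _ hu))
          (fun q' hq => hP q' (Set.mem_insert_iff.mpr (Or.inr (Set.mem_union_right _ hq))))
          (fun x hx => hρ x (Set.mem_union_right _ hx))
        obtain ⟨r', hr'⟩ := PS.den_nonempty
          (hP p (Set.mem_insert_iff.mpr (Or.inr (Set.mem_union_left _ (PS.self_mem_subP _)))))
          ρ (fun x hx => hρ x (Set.mem_union_left _ hx))
        refine ⟨PairLang.pairMul r' r, ⟨r', hr', r, hr, rfl⟩, ?_⟩
        rcases hbad with h | h
        · exact Or.inl (Word.append_not_wo_right r'.1 h)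
        · exact Or.inr (fun hc => h (Word.append_eq_eps_iff.mp hc).1)
    | .star p, ρ, t₁, t₂, hne2, hmem, hT, hP, hρ => by
      rcases hmem with heq | hmem
      · exact absurd heq (by intro hc; cases hc)
      · obtain ⟨r, hr, hbad⟩ := PS.den_bad p ρ t₁ t₂ hne2 hmem hT
          (fun q' hq => hP q' (Set.mem_insert_iff.mpr (Or.inr hq))) hρ
        refine ⟨PairLang.pairMul r (Word.eps A, Word.eps A),
          ⟨[r], by simpa using hr, by simp [List.foldr]⟩, ?_⟩
        rcases hbad with h | h
        · exact Or.inl (Word.append_not_wo_left _ h)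
        · exact Or.inr (fun hc => h (Word.append_eq_eps_iff.mp hc).2)
end

end Forward
/-- Let `t` be a closed `μωT_s`-expression of category `T` in which no subexpression
denotes the empty set and every subexpression of category `T` denoting `{ε}` is the
symbol `ε`. Then `|t|` consists of well-ordered words only iff every subexpression of `t`
of the form `t₁ × t₂` satisfies `t₂ = ε`. -/
theorem wellOrdered_iff_no_bad_pair (Alph : Type) [Fintype Alph] [Nonempty Alph]
    (t : TS Alph) (hclosed : t.free = ∅)
    (hTempty : ∀ s ∈ t.subT, s.denL ≠ ∅) (hPempty : ∀ q ∈ t.subP, q.denL ≠ ∅)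
    (hε : ∀ s ∈ t.subT, s.denL = {Word.eps (Alph ⊕ ℕ)} → s = TS.eps) :
    (∀ w ∈ t.den (fun _ => ∅), w.IsWellOrdered) ↔
      (∀ t₁ t₂ : TS Alph, PS.pair t₁ t₂ ∈ t.subP → t₂ = TS.eps) := by
  constructor
  · intro hwo t₁ t₂ hmem
    by_contra hne2
    obtain ⟨w, hw, hbad⟩ := TS.den_bad t (fun _ => ∅) t₁ t₂ hne2 hmem
      (fun s hs => ⟨hTempty s hs, hε s hs⟩) hPempty
      (by rw [hclosed]; exact fun x hx => absurd hx (Set.notMem_empty x))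
    exact hbad (hwo w hw)
  · intro hpair w hw
    exact TS.den_wo t (fun _ => ∅) (fun x w' hw' => absurd hw' (Set.notMem_empty w'))
      hpair w hw
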